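/- Let β : [0,∞) → ℝ be continuous, nonnegative and nonincreasing with β(0) = 1, and suppose there are constants K > 0 and α < 0 such that β(s)/(K·s^α) → 1 as s → ∞. Let k ≥ 1 be an integer with α·k < -1. Then ∫_0^∞ β(s)^k ds is finite and strictly positive, and for every a ∈ ℝ the ratio (∫_{[a,a+h]×[a,a+h]} β(|s-t|)^k ds dt) / ( 2·h·∫_0^∞ β(s)^k ds ) tends to 1 as h → ∞. -/

import Mathlib

open MeasureTheory Filter Set

/-- If `β : [0,∞) → ℝ` is continuous, nonnegative, nonincreasing with
`β 0 = 1` and `β s ∼ K s^α` as `s → ∞` for some `K > 0`, `α < 0`, and `k ≥ 1` is an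
integer with `α k < -1`, then `∫_0^∞ β^k` is finite and strictly positive, and for
every `a`, `∫_{[a,a+h]²} β(|s-t|)^k ∼ 2 h ∫_0^∞ β^k` as `h → ∞`. -/
theorem stmt1 (β : ℝ → ℝ) (K α : ℝ) (k : ℕ)
    (hβc : ContinuousOn β (Ici 0))
    (hβnn : ∀ s ∈ Ici (0 : ℝ), 0 ≤ β s)
    (hβmono : AntitoneOn β (Ici 0))
    (hβ0 : β 0 = 1)
    (hK : 0 < K) (hα : α < 0)
    (hasym : Tendsto (fun s : ℝ => β s / (K * s ^ α)) atTop (nhds 1))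
    (hk : 1 ≤ k) (hαk : α * (k : ℝ) < -1) :
    IntegrableOn (fun s => β s ^ k) (Ici 0) ∧
    (0 < ∫ s in Ici (0 : ℝ), β s ^ k) ∧
    ∀ a : ℝ, Tendsto (fun h : ℝ =>
      (∫ p in (Icc a (a + h)) ×ˢ (Icc a (a + h)), β |p.1 - p.2| ^ k) /
        (2 * h * ∫ s in Ici (0 : ℝ), β s ^ k))
      atTop (nhds 1) := by
  set g : ℝ → ℝ := fun u => β |u| ^ k with hg
  have hgc : Continuous g := by
    have h1 : Continuous fun u : ℝ => β |u| :=
      ContinuousOn.comp_continuous hβc continuous_abs (fun x => abs_nonneg x)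
    exact h1.pow k
  have hgnn : ∀ u, 0 ≤ g u := fun u => pow_nonneg (hβnn _ (abs_nonneg u)) k
  have hfeq : EqOn (fun s => β s ^ k) g (Ici 0) := fun s hs => by
    simp only [hg, abs_of_nonneg (Set.mem_Ici.mp hs)]
  -- tail bound
  have hev : ∀ᶠ s in atTop, β s ≤ 2 * K * s ^ α := by
    have h2 := hasym.eventually (eventually_le_nhds (show (1:ℝ) < 2 by norm_num))
    filter_upwards [h2, eventually_gt_atTop (0:ℝ)] with s h1 hs
    have hp : 0 < K * s ^ α := mul_pos hK (Real.rpow_pos_of_pos hs α)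
    rw [div_le_iff₀ hp] at h1
    nlinarith
  obtain ⟨M₀, hM₀⟩ := eventually_atTop.mp hev
  set M : ℝ := max M₀ 1 with hM
  have hM1 : (1:ℝ) ≤ M := le_max_right _ _
  have hM0 : (0:ℝ) < M := lt_of_lt_of_le one_pos hM1
  have htail : IntegrableOn g (Ioi M) := by
    have hdom : IntegrableOn (fun s : ℝ => (2*K)^k * s ^ (α * (k:ℝ))) (Ioi M) :=
      (integrableOn_Ioi_rpow_of_lt hαk hM0).const_mul _
    refine Integrable.mono hdom (hgc.aestronglyMeasurable.restrict) ?_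
    rw [ae_restrict_iff' measurableSet_Ioi]
    refine Eventually.of_forall fun s hs => ?_
    have hs0 : (0:ℝ) < s := lt_trans hM0 hs
    have hβle : β s ≤ 2 * K * s ^ α := hM₀ s (le_of_lt (lt_of_le_of_lt (le_max_left _ _) hs))
    have hβn : 0 ≤ β s := hβnn s hs0.le
    have h1 : g s = β s ^ k := by simp only [hg, abs_of_nonneg hs0.le]
    have h2 : β s ^ k ≤ (2 * K * s ^ α) ^ k := pow_le_pow_left₀ hβn hβle k
    have h3 : (2 * K * s ^ α) ^ k = (2*K)^k * s ^ (α * (k:ℝ)) := by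
      rw [mul_pow, Real.rpow_mul hs0.le, Real.rpow_natCast]
    rw [Real.norm_eq_abs, Real.norm_eq_abs, abs_of_nonneg (hgnn s), abs_of_nonneg]
    · rw [h1]; rw [h3] at h2; exact h2
    · positivity
  have hcomp : IntegrableOn g (Icc 0 M) :=
    hgc.continuousOn.integrableOn_compact isCompact_Icc
  have hgint : IntegrableOn g (Ici 0) := by
    refine (hcomp.union htail).mono_set ?_
    intro s hs
    rcases le_or_gt s M with h | h
    · exact Or.inl ⟨hs, h⟩
    · exact Or.inr h
  have hfint : IntegrableOn (fun s => β s ^ k) (Ici 0) :=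
    hgint.congr_fun (fun s hs => (hfeq hs).symm) measurableSet_Ici
  set I : ℝ := ∫ s in Ici (0:ℝ), β s ^ k with hIdef
  have hIg : ∫ s in Ici (0:ℝ), g s = I :=
    (setIntegral_congr_fun measurableSet_Ici fun s hs => (hfeq hs).symm)
  -- positivity
  have hnn_ae : 0 ≤ᵐ[volume.restrict (Ici (0:ℝ))] fun s => β s ^ k := by
    exact (ae_restrict_iff' measurableSet_Ici).mpr
      (Eventually.of_forall fun s hs => pow_nonneg (hβnn s hs) k)
  have hIpos : 0 < I := by
    have hc0 : Tendsto β (nhdsWithin 0 (Ici 0)) (nhds 1) := by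
      have := (hβc 0 self_mem_Ici).tendsto
      rwa [hβ0] at this
    have hev2 : ∀ᶠ s in nhdsWithin 0 (Ici 0), (1/2 : ℝ) ≤ β s :=
      hc0.eventually (eventually_ge_nhds (by norm_num))
    obtain ⟨δ, hδ0, hδ⟩ := mem_nhdsGE_iff_exists_Icc_subset.mp hev2
    have hδpos : (0:ℝ) < δ := hδ0
    have h1 : (1/2:ℝ)^k * δ ≤ ∫ s in Icc (0:ℝ) δ, β s ^ k := by
      have := setIntegral_ge_of_const_le (μ := volume) measurableSet_Icc
        (by simp [Real.volume_Icc]) (fun x hx => pow_le_pow_left₀ (by norm_num) (hδ hx) k)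
        (hfint.mono_set (Icc_subset_Ici_self))
      rwa [Real.volume_real_Icc_of_le hδpos.le, sub_zero, smul_eq_mul, mul_comm] at this
    have h2 : ∫ s in Icc (0:ℝ) δ, β s ^ k ≤ I :=
      setIntegral_mono_set hfint hnn_ae (HasSubset.Subset.eventuallyLE Icc_subset_Ici_self)
    have : (0:ℝ) < (1/2:ℝ)^k * δ := by positivity
    linarith
  refine ⟨hfint, hIpos, ?_⟩
  -- the primitive
  set F : ℝ → ℝ := fun x => ∫ u in (0:ℝ)..x, g u with hF
  have hFc : Continuous F :=
    intervalIntegral.continuous_primitive (fun a b => hgc.intervalIntegrable a b) 0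
  have hIoi : IntegrableOn g (Ioi 0) := hgint.mono_set Ioi_subset_Ici_self
  have hIeq : ∫ s in Ioi (0:ℝ), g s = I := by
    rw [← integral_Ici_eq_integral_Ioi, hIg]
  have hFlim : Tendsto F atTop (nhds I) := by
    have := intervalIntegral_tendsto_integral_Ioi 0 hIoi tendsto_id
    rwa [hIeq] at this
  have hFnn : ∀ x : ℝ, 0 ≤ x → 0 ≤ F x := fun x hx =>
    intervalIntegral.integral_nonneg hx fun u _ => hgnn u
  have hFle : ∀ x : ℝ, 0 ≤ x → F x ≤ I := by
    intro x hx
    show (∫ u in (0:ℝ)..x, g u) ≤ I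
    rw [intervalIntegral.integral_of_le hx, ← hIeq]
    exact setIntegral_mono_set hIoi
      ((ae_restrict_iff' measurableSet_Ioi).mpr (Eventually.of_forall fun u _ => hgnn u))
      (HasSubset.Subset.eventuallyLE Ioc_subset_Ioi_self)
  -- Cesàro mean via dominated convergence
  have hmean : Tendsto (fun h : ℝ => ∫ y in Ioc (0:ℝ) 1, F (h * y)) atTop (nhds I) := by
    have hlim := tendsto_integral_filter_of_dominated_convergence (l := (atTop : Filter ℝ)) (μ := volume.restrict (Ioc (0:ℝ) 1))
      (F := fun (h : ℝ) (y : ℝ) => F (h * y)) (f := fun _ => I) (bound := fun _ => I)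
      (Eventually.of_forall fun h =>
        ((hFc.comp (continuous_const.mul continuous_id)).aestronglyMeasurable).restrict)
      ?_ ?_ ?_
    · have : ∫ _ in Ioc (0:ℝ) 1, I = I := by
        rw [setIntegral_const, Real.volume_real_Ioc]
        norm_num
      rwa [this] at hlim
    · filter_upwards [eventually_ge_atTop (0:ℝ)] with h hh
      rw [ae_restrict_iff' measurableSet_Ioc]
      refine Eventually.of_forall fun y hy => ?_
      have hxy : 0 ≤ h * y := mul_nonneg hh hy.1.le
      rw [Real.norm_eq_abs, abs_of_nonneg (hFnn _ hxy)]
      exact hFle _ hxy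
    · exact integrableOn_const (by simp [Real.volume_Ioc])
    · rw [ae_restrict_iff' measurableSet_Ioc]
      refine Eventually.of_forall fun y hy => ?_
      exact hFlim.comp (tendsto_id.atTop_mul_const hy.1)
  intro a
  -- key identity
  have key : ∀ h : ℝ, 0 ≤ h →
      (∫ p in (Icc a (a + h)) ×ˢ (Icc a (a + h)), β |p.1 - p.2| ^ k) =
        2 * ∫ x in (0:ℝ)..h, F x := by
    intro h hh
    have hab : a ≤ a + h := by linarith
    have hGc : Continuous fun p : ℝ × ℝ => g (p.1 - p.2) :=
      hgc.comp (continuous_fst.sub continuous_snd)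
    have hint : IntegrableOn (fun p : ℝ × ℝ => g (p.1 - p.2))
        ((Icc a (a+h)) ×ˢ (Icc a (a+h))) :=
      hGc.continuousOn.integrableOn_compact (isCompact_Icc.prod isCompact_Icc)
    have hLHS : (∫ p in (Icc a (a + h)) ×ˢ (Icc a (a + h)), β |p.1 - p.2| ^ k) =
        ∫ x in Icc a (a+h), ∫ y in Icc a (a+h), g (x - y) := by
      rw [Measure.volume_eq_prod] at hint ⊢
      exact setIntegral_prod (fun p => g (p.1 - p.2)) hint
    have inner : ∀ x : ℝ, (∫ y in Icc a (a+h), g (x - y)) = F (a + h - x) + F (x - a) := by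
      intro x
      rw [integral_Icc_eq_integral_Ioc, ← intervalIntegral.integral_of_le hab,
        intervalIntegral.integral_comp_sub_left g x]
      have h1 : IntervalIntegrable g volume (x - (a+h)) 0 := hgc.intervalIntegrable _ _
      have h2 : IntervalIntegrable g volume 0 (x - a) := hgc.intervalIntegrable _ _
      rw [← intervalIntegral.integral_add_adjacent_intervals h1 h2]
      congr 1
      have e1 : ∫ u in (0:ℝ)..(a + h - x), g u = ∫ u in (0:ℝ)..(a + h - x), g (-u) := by
        refine intervalIntegral.integral_congr fun u _ => ?_
        simp [hg, abs_neg]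
      show _ = ∫ u in (0:ℝ)..(a + h - x), g u
      rw [e1, intervalIntegral.integral_comp_neg g]
      norm_num
    rw [hLHS]
    simp only [inner]
    rw [integral_Icc_eq_integral_Ioc, ← intervalIntegral.integral_of_le hab]
    have hi1 : IntervalIntegrable (fun x => F (a + h - x)) volume a (a+h) :=
      ((hFc.comp (continuous_const.sub continuous_id)).intervalIntegrable _ _)
    have hi2 : IntervalIntegrable (fun x => F (x - a)) volume a (a+h) :=
      ((hFc.comp (continuous_id.sub continuous_const)).intervalIntegrable _ _)
    rw [intervalIntegral.integral_add hi1 hi2,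
      intervalIntegral.integral_comp_sub_left F (a+h),
      intervalIntegral.integral_comp_sub_right F a]
    simp only [sub_self, add_sub_cancel_left]
    ring
  -- conclusion
  have hquot : Tendsto (fun h : ℝ => (∫ y in Ioc (0:ℝ) 1, F (h * y)) / I) atTop (nhds 1) := by
    have := hmean.div_const I
    rwa [div_self hIpos.ne'] at this
  refine Tendsto.congr' ?_ hquot
  filter_upwards [eventually_ge_atTop (1:ℝ)] with h hh
  have hh0 : (0:ℝ) < h := lt_of_lt_of_le one_pos hh
  rw [key h hh0.le]
  have hcv : (∫ y in Ioc (0:ℝ) 1, F (h * y)) = h⁻¹ * ∫ x in (0:ℝ)..h, F x := by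
    rw [← intervalIntegral.integral_of_le zero_le_one,
      intervalIntegral.integral_comp_mul_left F hh0.ne']
    simp
  rw [hcv]
  field_simp
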